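/- Let f = max A (possibly f < b−1), κ = (b−1)/f, and let s be a complex number with σ := Re s > log N / log b. Then the rescaled measure ν_s (the image of μ_s under multiplication by κ) satisfies the Hölder condition at 1 with exponent σ: there exists K < ∞ such that for all x ∈ [0,1), Σ_{l=0}^∞ Σ over those (a_1,…,a_l) ∈ A^l with κ·(a_1/b + ⋯ + a_l/b^l) ≥ x of b^{−lσ} ≤ K (1−x)^σ. -/

import Mathlib

open Finset
open scoped ENNReal NNReal

noncomputable section

/-- The rational point a₁/b + ⋯ + a_l/b^l attached to a digit tuple. -/
def digitVal (b l : ℕ) (a : Fin l → ℕ) : ℝ :=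
  ∑ i : Fin l, (a i : ℝ) / (b : ℝ) ^ ((i : ℕ) + 1)

/-- The finset of digit tuples of length l with entries in A. -/
def tuples (A : Finset ℕ) (l : ℕ) : Finset (Fin l → ℕ) :=
  Fintype.piFinset fun _ => A

set_option maxHeartbeats 1000000 in
lemma geom_id (b : ℕ) (hb : 2 ≤ b) (l : ℕ) :
    ∑ j ∈ Finset.range l, ((b:ℝ) - 1) / (b:ℝ) ^ (j+1) = 1 - ((b:ℝ)⁻¹) ^ l := by
  have hb0 : (b:ℝ) ≠ 0 := by positivity
  induction l with
  | zero => simp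
  | succ n ih =>
    rw [Finset.sum_range_succ, ih]
    simp only [inv_pow]
    field_simp
    ring

lemma gap_le (b : ℕ) (hb : 2 ≤ b) (A : Finset ℕ) (f : ℕ)
    (hfmax : ∀ a ∈ A, a ≤ f) (l : ℕ) (a : Fin l → ℕ) (ha : a ∈ tuples A l)
    (i : Fin l) :
    ((f:ℝ) - a i) / (b:ℝ) ^ ((i:ℕ)+1)
      ≤ (f:ℝ) / ((b:ℝ) - 1) * (1 - ((b:ℝ)⁻¹) ^ l) - digitVal b l a := by
  have hb0 : (0:ℝ) < b := by positivity
  have hmem : ∀ j : Fin l, a j ∈ A := by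
    intro j; exact (Fintype.mem_piFinset.mp ha) j
  have key : ((f:ℝ) - a i) / (b:ℝ) ^ ((i:ℕ)+1)
      ≤ ∑ j : Fin l, ((f:ℝ) - a j) / (b:ℝ) ^ ((j:ℕ)+1) := by
    apply Finset.single_le_sum (f := fun j : Fin l => ((f:ℝ) - a j) / (b:ℝ) ^ ((j:ℕ)+1))
    · intro j _
      have : (a j : ℝ) ≤ f := by exact_mod_cast hfmax _ (hmem j)
      have hp : (0:ℝ) < (b:ℝ) ^ ((j:ℕ)+1) := by positivity
      apply div_nonneg (by linarith) hp.le
    · exact Finset.mem_univ i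
  have sum_eq : ∑ j : Fin l, ((f:ℝ) - a j) / (b:ℝ) ^ ((j:ℕ)+1)
      = (f:ℝ) / ((b:ℝ) - 1) * (1 - ((b:ℝ)⁻¹) ^ l) - digitVal b l a := by
    have hf_sum : ∑ j : Fin l, (f:ℝ) / (b:ℝ) ^ ((j:ℕ)+1)
        = (f:ℝ) / ((b:ℝ) - 1) * (1 - ((b:ℝ)⁻¹) ^ l) := by
      have hb1 : (1:ℝ) < (b:ℝ) := by exact_mod_cast hb.trans_lt' one_lt_two
      have h := geom_id b hb l
      rw [Fin.sum_univ_eq_sum_range (fun j => (f:ℝ) / (b:ℝ) ^ (j+1))]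
      have : ∀ j, (f:ℝ) / (b:ℝ) ^ (j+1)
          = (f:ℝ) / ((b:ℝ) - 1) * (((b:ℝ) - 1) / (b:ℝ) ^ (j+1)) := by
        intro j
        rw [eq_comm, div_mul_div_comm, mul_comm (f:ℝ),
          mul_div_mul_left _ _ (by linarith : (b:ℝ) - 1 ≠ 0)]
      rw [Finset.sum_congr rfl (fun j _ => this j), ← Finset.mul_sum, h]
    rw [digitVal, ← hf_sum, ← Finset.sum_sub_distrib]
    exact Finset.sum_congr rfl (fun j _ => by ring)
  linarith [key, sum_eq ▸ key]

lemma card_forced (A : Finset ℕ) (f : ℕ) (l m : ℕ) (hm : m ≤ l)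
    (T : Finset (Fin l → ℕ)) (hT : T ⊆ tuples A l)
    (hforce : ∀ a ∈ T, ∀ i : Fin l, (i:ℕ) < m → a i = f) :
    T.card ≤ A.card ^ (l - m) := by
  have hle : T.card ≤ (tuples A (l - m)).card := by
    apply Finset.card_le_card_of_injOn
      (fun a => fun j : Fin (l - m) => a ⟨m + j, lt_tsub_iff_left.mp j.isLt⟩)
    · intro a ha
      rw [tuples, Finset.mem_coe, Fintype.mem_piFinset]
      intro j
      exact (Fintype.mem_piFinset.mp (hT ha)) _
    · intro a ha a' ha' h
      funext i
      by_cases hi : (i:ℕ) < m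
      · rw [hforce a ha i hi, hforce a' ha' i hi]
      · have hlt : (i:ℕ) - m < l - m := by omega
        have h2 := congrFun h ⟨(i:ℕ) - m, hlt⟩
        dsimp only at h2
        have hidx : (⟨m + ((i:ℕ) - m), lt_tsub_iff_left.mp hlt⟩ : Fin l) = i := by
          apply Fin.ext
          show m + ((i:ℕ) - m) = (i:ℕ)
          omega
        rw [hidx] at h2
        exact h2
  calc T.card ≤ (tuples A (l - m)).card := hle
    _ = A.card ^ (l - m) := by rw [tuples, Fintype.card_piFinset_const]

set_option maxHeartbeats 1000000 in
/-- Let f = max A (possibly f < b−1), κ = (b−1)/f, σ = Re s > log N / log b.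
The rescaled measure ν_s satisfies the Hölder condition at 1 with exponent σ:
there is K < ∞ with Σ over tuples whose rescaled value κ·(a₁/b+⋯+a_l/b^l) is ≥ x of
b^{−lσ} bounded by K(1−x)^σ, for all x ∈ [0,1). -/
theorem nu_s_holder
    (b : ℕ) (hb : 2 ≤ b) (A : Finset ℕ) (hA : A.Nonempty) (hAb : A ⊆ Finset.range b)
    (f : ℕ) (hfA : f ∈ A) (hfmax : ∀ a ∈ A, a ≤ f) (hf0 : 0 < f)
    (s : ℂ) (hs : Real.log A.card / Real.log b < s.re) :
    ∃ K : ℝ, ∀ x ∈ Set.Ico (0:ℝ) 1,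
      ∑' l : ℕ, ∑ a ∈ (tuples A l).filter
          (fun a => x ≤ ((b : ℝ) - 1) / (f : ℝ) * digitVal b l a),
        ENNReal.ofReal ((b : ℝ) ^ (-(l : ℝ) * s.re))
      ≤ ENNReal.ofReal (K * (1 - x) ^ s.re) := by
  set σ := s.re with hσdef
  set N := A.card with hNdef
  have hb1 : (1:ℝ) < (b:ℝ) := by exact_mod_cast hb.trans_lt' one_lt_two
  have hb0 : (0:ℝ) < (b:ℝ) := by linarith
  have hN1 : 1 ≤ N := hA.card_pos
  have hN0 : (0:ℝ) < (N:ℝ) := by exact_mod_cast hN1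
  have hlogb : (0:ℝ) < Real.log b := Real.log_pos hb1
  have hσ0 : 0 < σ :=
    lt_of_le_of_lt (div_nonneg (Real.log_natCast_nonneg N) hlogb.le) hs
  have hf0' : (0:ℝ) < (f:ℝ) := by exact_mod_cast hf0
  have hfb : (f:ℝ) ≤ (b:ℝ) - 1 := by
    have h1 : f + 1 ≤ b := Finset.mem_range.mp (hAb hfA)
    have h2 : (f:ℝ) + 1 ≤ (b:ℝ) := by exact_mod_cast h1
    linarith
  set κ : ℝ := ((b:ℝ) - 1) / (f:ℝ) with hκdef
  have hκ1 : 1 ≤ κ := by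
    rw [hκdef, le_div_iff₀ hf0']
    linarith
  have hκ0 : 0 < κ := by linarith
  have hκf : κ * (f:ℝ) = (b:ℝ) - 1 := by
    rw [hκdef]; field_simp
  -- r < 1
  set r : ℝ := (N:ℝ) * (b:ℝ) ^ (-σ) with hrdef
  have hbσ : (0:ℝ) < (b:ℝ) ^ σ := Real.rpow_pos_of_pos hb0 σ
  have hr0 : 0 ≤ r := by positivity
  have hr1 : r < 1 := by
    have hlt : (N:ℝ) < (b:ℝ) ^ σ := by
      rw [Real.lt_rpow_iff_log_lt hN0 hb0]
      exact (div_lt_iff₀ hlogb).mp hs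
    rw [hrdef, Real.rpow_neg hb0.le, ← div_eq_mul_inv, div_lt_one hbσ]
    exact hlt
  refine ⟨(N:ℝ) / (1 - r), ?_⟩
  intro x hx
  obtain ⟨hx0, hx1⟩ := hx
  set δ : ℝ := 1 - x with hδdef
  have hδ0 : 0 < δ := by simp [hδdef]; linarith
  have hδ1 : δ ≤ 1 := by simp [hδdef]; linarith
  -- the threshold L
  have hex : ∃ n : ℕ, 1 ≤ δ * (b:ℝ) ^ n := by
    obtain ⟨n, hn⟩ := pow_unbounded_of_one_lt (1/δ) hb1
    exact ⟨n, by rw [div_lt_iff₀ hδ0] at hn; nlinarith⟩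
  set L := Nat.find hex with hLdef
  have hL : 1 ≤ δ * (b:ℝ) ^ L := Nat.find_spec hex
  have hLmin : ∀ k, k < L → δ * (b:ℝ) ^ k < 1 := by
    intro k hk
    have := Nat.find_min hex hk
    linarith [not_le.mp this]
  -- basic value bound for members of filter
  have hval : ∀ l (a : Fin l → ℕ), a ∈ tuples A l → 0 < l →
      κ * digitVal b l a ≤ 1 - ((b:ℝ)⁻¹) ^ l := by
    intro l a ha hl
    have hi : (⟨0, hl⟩ : Fin l) ∈ Finset.univ := Finset.mem_univ _
    have hg := gap_le b hb A f hfmax l a ha ⟨0, hl⟩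
    have hnn : (0:ℝ) ≤ ((f:ℝ) - a ⟨0, hl⟩) / (b:ℝ) ^ (((⟨0, hl⟩ : Fin l) : ℕ)+1) := by
      have hle : (a ⟨0, hl⟩ : ℝ) ≤ f := by
        exact_mod_cast hfmax _ ((Fintype.mem_piFinset.mp ha) _)
      have hp : (0:ℝ) < (b:ℝ) ^ (((⟨0, hl⟩ : Fin l) : ℕ)+1) := by positivity
      exact div_nonneg (by linarith) hp.le
    have hv : digitVal b l a ≤ (f:ℝ) / ((b:ℝ) - 1) * (1 - ((b:ℝ)⁻¹) ^ l) := by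
      linarith
    calc κ * digitVal b l a ≤ κ * ((f:ℝ) / ((b:ℝ) - 1) * (1 - ((b:ℝ)⁻¹) ^ l)) := by
          apply mul_le_mul_of_nonneg_left hv hκ0.le
      _ = 1 - ((b:ℝ)⁻¹) ^ l := by
          rw [hκdef]
          have hbne : (b:ℝ) - 1 ≠ 0 := by linarith
          field_simp
  -- the filtered sets
  have hempty : ∀ l, l < L →
      (tuples A l).filter (fun a => x ≤ κ * digitVal b l a) = ∅ := by
    intro l hl
    rw [Finset.filter_eq_empty_iff]
    intro a ha hxa
    rcases Nat.eq_zero_or_pos l with h0 | hpos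
    · subst h0
      have : digitVal b 0 a = 0 := by simp [digitVal]
      rw [this, mul_zero] at hxa
      have hx0' : x = 0 := le_antisymm hxa hx0
      have : δ * (b:ℝ) ^ (0:ℕ) < 1 := hLmin 0 (by omega)
      simp [hδdef, hx0'] at this
    · have h1 := hval l a ha hpos
      have h2 : ((b:ℝ)⁻¹) ^ l ≤ δ := by
        rw [hδdef]; linarith
      have h3 : δ * (b:ℝ) ^ l < 1 := hLmin l hl
      have hbl : (0:ℝ) < (b:ℝ) ^ l := by positivity
      rw [inv_pow, inv_le_iff_one_le_mul₀ hbl] at h2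
      nlinarith
  -- forcing
  have hforce : ∀ l (a : Fin l → ℕ),
      a ∈ (tuples A l).filter (fun a => x ≤ κ * digitVal b l a) →
      ∀ i : Fin l, (i:ℕ) < L - 1 → a i = f := by
    intro l a ha i hi
    obtain ⟨haT, hxa⟩ := Finset.mem_filter.mp ha
    by_contra hne
    have hai : a i ≤ f := hfmax _ ((Fintype.mem_piFinset.mp haT) _)
    have hgap1 : (1:ℝ) ≤ (f:ℝ) - a i := by
      have : a i < f := lt_of_le_of_ne hai hne
      have : (a i : ℝ) + 1 ≤ (f:ℝ) := by exact_mod_cast this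
      linarith
    have hg := gap_le b hb A f hfmax l a haT i
    have hl : 0 < l := i.pos
    have hκs : κ * ((f:ℝ) / ((b:ℝ) - 1) * (1 - ((b:ℝ)⁻¹) ^ l)) = 1 - ((b:ℝ)⁻¹) ^ l := by
      rw [hκdef]
      have hbne : (b:ℝ) - 1 ≠ 0 := by linarith
      field_simp
    have hbl : (0:ℝ) < (b:ℝ) ^ ((i:ℕ)+1) := by positivity
    -- κ * (f - a i)/b^(i+1) ≤ 1 - κ val ≤ δ
    have step : κ * (((f:ℝ) - a i) / (b:ℝ) ^ ((i:ℕ)+1)) ≤ δ := by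
      have h1 := mul_le_mul_of_nonneg_left hg hκ0.le
      rw [mul_sub, hκs] at h1
      have hinvl : (0:ℝ) ≤ ((b:ℝ)⁻¹) ^ l := by positivity
      have : x ≤ κ * digitVal b l a := hxa
      rw [hδdef]
      linarith
    have lower : ((b:ℝ) ^ ((i:ℕ)+1))⁻¹ ≤ κ * (((f:ℝ) - a i) / (b:ℝ) ^ ((i:ℕ)+1)) := by
      have hone : (1:ℝ) ≤ κ * ((f:ℝ) - a i) := by nlinarith
      rw [mul_div_assoc', inv_eq_one_div]
      exact (div_le_div_iff_of_pos_right hbl).mpr hone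

    have h4 : 1 ≤ δ * (b:ℝ) ^ ((i:ℕ)+1) := by
      have := le_trans lower step
      rw [inv_le_iff_one_le_mul₀ hbl] at this
      nlinarith
    have h5 : δ * (b:ℝ) ^ ((i:ℕ)+1) < 1 := hLmin _ (by omega)
    linarith
  -- cardinality bound for shifted indices
  have hcard : ∀ k : ℕ,
      ((tuples A (k + L)).filter (fun a => x ≤ κ * digitVal b (k+L) a)).card
        ≤ N ^ (k + 1) := by
    intro k
    set l := k + L with hldef
    have hm : min l (L - 1) ≤ l := min_le_left _ _
    have h := card_forced A f l (min l (L - 1)) hm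
      ((tuples A l).filter (fun a => x ≤ κ * digitVal b l a))
      (Finset.filter_subset _ _)
      (fun a ha i hiM => hforce l a ha i (lt_of_lt_of_le hiM (min_le_right _ _)))
    refine le_trans h ?_
    apply Nat.pow_le_pow_right (by omega : 1 ≤ N)
    omega
  -- now the summation
  have inner_eq : ∀ l : ℕ,
      (∑ a ∈ (tuples A l).filter (fun a => x ≤ κ * digitVal b l a),
        ENNReal.ofReal ((b:ℝ) ^ (-(l:ℝ) * σ)))
      = (((tuples A l).filter (fun a => x ≤ κ * digitVal b l a)).card : ℝ≥0∞)
          * ENNReal.ofReal ((b:ℝ) ^ (-(l:ℝ) * σ)) := by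
    intro l
    rw [Finset.sum_const, nsmul_eq_mul]
  set g : ℕ → ℝ≥0∞ := fun l =>
    (((tuples A l).filter (fun a => x ≤ κ * digitVal b l a)).card : ℝ≥0∞)
      * ENNReal.ofReal ((b:ℝ) ^ (-(l:ℝ) * σ)) with hgdef
  have htsum_eq : (∑' l : ℕ, ∑ a ∈ (tuples A l).filter
          (fun a => x ≤ κ * digitVal b l a),
        ENNReal.ofReal ((b : ℝ) ^ (-(l : ℝ) * σ))) = ∑' l, g l := by
    exact tsum_congr inner_eq
  rw [htsum_eq]
  have hshift : ∑' l, g l = ∑' k, g (k + L) := by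
    refine (Function.Injective.tsum_eq (g := fun k => k + L)
      (add_left_injective L) ?_).symm
    intro l hl
    rcases le_or_gt L l with h | h
    · exact ⟨l - L, by simp; omega⟩
    · exfalso
      apply hl
      show g l = 0
      rw [hgdef]
      simp only
      rw [hempty l h]
      simp
  -- per-term bound
  have hterm : ∀ k : ℕ, g (k + L) ≤
      ENNReal.ofReal ((N:ℝ) * (b:ℝ) ^ (-(L:ℝ) * σ)) * (ENNReal.ofReal r) ^ k := by
    intro k
    have hcardk := hcard k
    have hcast : ((((tuples A (k+L)).filter
        (fun a => x ≤ κ * digitVal b (k+L) a)).card : ℝ≥0∞)) ≤ ((N ^ (k+1) : ℕ) : ℝ≥0∞) := by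
      exact_mod_cast hcardk
    have hreal : ((N ^ (k+1) : ℕ) : ℝ) * (b:ℝ) ^ (-(((k+L):ℕ):ℝ) * σ)
        = ((N:ℝ) * (b:ℝ) ^ (-(L:ℝ) * σ)) * r ^ k := by
      have hpow : (b:ℝ) ^ (-(((k+L):ℕ):ℝ) * σ)
          = (b:ℝ) ^ (-(L:ℝ) * σ) * ((b:ℝ) ^ (-σ)) ^ k := by
        rw [← Real.rpow_natCast ((b:ℝ) ^ (-σ)) k, ← Real.rpow_mul hb0.le,
          ← Real.rpow_add hb0]
        congr 1
        push_cast
        ring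
      rw [hpow, hrdef, mul_pow]
      push_cast
      ring
    calc g (k + L)
        = (((tuples A (k+L)).filter (fun a => x ≤ κ * digitVal b (k+L) a)).card : ℝ≥0∞)
          * ENNReal.ofReal ((b:ℝ) ^ (-(((k+L):ℕ):ℝ) * σ)) := rfl
      _ ≤ ((N ^ (k+1) : ℕ) : ℝ≥0∞) * ENNReal.ofReal ((b:ℝ) ^ (-(((k+L):ℕ):ℝ) * σ)) := by
          exact mul_le_mul_left hcast _
      _ = ENNReal.ofReal (((N ^ (k+1) : ℕ) : ℝ) * (b:ℝ) ^ (-(((k+L):ℕ):ℝ) * σ)) := by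
          rw [ENNReal.ofReal_mul (by positivity)]
          congr 1
          rw [ENNReal.ofReal_natCast]
      _ = ENNReal.ofReal (((N:ℝ) * (b:ℝ) ^ (-(L:ℝ) * σ)) * r ^ k) := by rw [hreal]
      _ = ENNReal.ofReal ((N:ℝ) * (b:ℝ) ^ (-(L:ℝ) * σ)) * (ENNReal.ofReal r) ^ k := by
          rw [ENNReal.ofReal_mul (by positivity), ENNReal.ofReal_pow hr0]
  have hgeom : ∑' k : ℕ, ENNReal.ofReal ((N:ℝ) * (b:ℝ) ^ (-(L:ℝ) * σ)) * (ENNReal.ofReal r) ^ k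
      = ENNReal.ofReal ((N:ℝ) * (b:ℝ) ^ (-(L:ℝ) * σ)) * (1 - ENNReal.ofReal r)⁻¹ := by
    rw [ENNReal.tsum_mul_left, ENNReal.tsum_geometric]
  -- final numeric bound
  have hfinal : ENNReal.ofReal ((N:ℝ) * (b:ℝ) ^ (-(L:ℝ) * σ)) * (1 - ENNReal.ofReal r)⁻¹
      ≤ ENNReal.ofReal ((N:ℝ) / (1 - r) * (1 - x) ^ σ) := by
    have h1r : (0:ℝ) < 1 - r := by linarith
    have hsub : (1 : ℝ≥0∞) - ENNReal.ofReal r = ENNReal.ofReal (1 - r) := by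
      rw [ENNReal.ofReal_sub 1 hr0, ENNReal.ofReal_one]
    rw [hsub, ← ENNReal.ofReal_inv_of_pos h1r,
      ← ENNReal.ofReal_mul (by positivity)]
    apply ENNReal.ofReal_le_ofReal
    have hbL : (b:ℝ) ^ (-(L:ℝ) * σ) ≤ δ ^ σ := by
      have hbLval : (b:ℝ) ^ (-(L:ℝ)) ≤ δ := by
        rw [Real.rpow_neg hb0.le, Real.rpow_natCast]
        rw [inv_le_iff_one_le_mul₀ (by positivity)]
        nlinarith
      calc (b:ℝ) ^ (-(L:ℝ) * σ) = ((b:ℝ) ^ (-(L:ℝ))) ^ σ := by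
            rw [← Real.rpow_mul hb0.le]
        _ ≤ δ ^ σ := Real.rpow_le_rpow (by positivity) hbLval hσ0.le
    calc (N:ℝ) * (b:ℝ) ^ (-(L:ℝ) * σ) * (1 - r)⁻¹
        ≤ (N:ℝ) * δ ^ σ * (1 - r)⁻¹ := by
          apply mul_le_mul_of_nonneg_right (mul_le_mul_of_nonneg_left hbL hN0.le)
            (by positivity)
      _ = (N:ℝ) / (1 - r) * (1 - x) ^ σ := by rw [hδdef]; ring
  calc ∑' l, g l = ∑' k, g (k + L) := hshift
    _ ≤ ∑' k : ℕ, ENNReal.ofReal ((N:ℝ) * (b:ℝ) ^ (-(L:ℝ) * σ)) * (ENNReal.ofReal r) ^ k :=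
        ENNReal.tsum_le_tsum hterm
    _ = ENNReal.ofReal ((N:ℝ) * (b:ℝ) ^ (-(L:ℝ) * σ)) * (1 - ENNReal.ofReal r)⁻¹ := hgeom
    _ ≤ ENNReal.ofReal ((N:ℝ) / (1 - r) * (1 - x) ^ σ) := hfinal
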